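/- Let m ≥ 2, α > 0, and let Q : (0,∞) → ℝ be a positive non-decreasing function with Q(t) = o(t²) as t → +∞ and liminf_{r→+∞} Q(r)·(log r)/r² < +∞. Let b : ℝ^m → ℝ be continuous with b(x) ≥ 1/Q(|x|) for |x| > 0, and let f : ℝ → ℝ be continuous. Suppose u ∈ C²(ℝ^m) satisfies u* := sup u < +∞ and div(∇u/(1+|∇u|²)^α)(x) ≥ b(x) f(u(x)) for every x in the set Ω_γ = {x ∈ ℝ^m : u(x) > γ}, for some γ < u*. Then f(u*) ≤ 0. -/

import Mathlib

open Filter Asymptotics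

/-- The divergence of a vector field on Euclidean space. -/
noncomputable def euclideanDiv {m : ℕ}
    (X : EuclideanSpace ℝ (Fin m) → EuclideanSpace ℝ (Fin m))
    (x : EuclideanSpace ℝ (Fin m)) : ℝ :=
  ∑ i, fderiv ℝ (fun y => X y i) x (EuclideanSpace.single i 1)

/-- The generalized mean curvature operator on Euclidean space: the divergence of the
vector field `∇u / (1 + |∇u|²)^α`. -/
noncomputable def meanCurvatureOp {m : ℕ} (α : ℝ) (u : EuclideanSpace ℝ (Fin m) → ℝ)
    (x : EuclideanSpace ℝ (Fin m)) : ℝ :=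
  euclideanDiv (fun y => ((1 + ‖gradient u y‖ ^ 2) ^ α)⁻¹ • gradient u y) x

open Finset

lemma alg_aux {m : ℕ} (B : Fin m → Fin m → ℝ) (M : ℝ) (hM : 0 ≤ M)
    (hq : ∀ v : Fin m → ℝ, ∑ i, ∑ j, v i * v j * B i j ≤ M * ∑ i, (v i)^2)
    (p : Fin m → ℝ) (c β : ℝ) (hc0 : 0 ≤ c) (hc1 : c ≤ 1) (hβ : 0 ≤ β)
    (hβp : β * (m * ∑ i, (p i)^2) ≤ c) :
    c * (∑ i, B i i) - β * (∑ i, ∑ j, p i * p j * B i j) ≤ m * M := by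
  classical
  set P : Fin m → Fin m → ℝ := fun i j => (if i = j then M else 0) - B i j with hP
  -- diagonal nonneg
  have hdiag : ∀ i, 0 ≤ P i i := by
    intro i
    have h := hq (fun k => if k = i then 1 else 0)
    simp only [ite_mul, one_mul, zero_mul, mul_ite, mul_one, mul_zero] at h
    rw [Finset.sum_eq_single i (fun b _ hb => by
        rw [Finset.sum_eq_zero]; intro j _; split <;> simp_all) (by simp)] at h
    rw [Finset.sum_eq_single i (fun b _ hb => by simp [hb]) (by simp)] at h
    rw [Finset.sum_eq_single i (fun b _ hb => by simp [hb]) (by simp)] at h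
    norm_num at h
    have : P i i = M - B i i := by simp [P]
    rw [this]; linarith
  -- pair inequality
  have hpair : ∀ i j, p i * p j * P i j + p j * p i * P j i ≤
      (p i)^2 * P i i + (p j)^2 * P j j := by
    intro i j
    by_cases hij : i = j
    · subst hij; ring_nf; nlinarith [hdiag i, sq_nonneg (p i)]
    · have h := hq (fun k => if k = i then p i else if k = j then - p j else 0)
      have collapse : (∑ k, ∑ l, (if k = i then p i else if k = j then - p j else 0) *
          ((if l = i then p i else if l = j then - p j else 0) * B k l)) =
          (p i * (p i * B i i) + p i * (- p j * B i j))
          + ((- p j) * (p i * B j i) + (- p j) * (- p j * B j j)) := by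
        rw [Finset.sum_eq_add_of_mem i j (Finset.mem_univ i) (Finset.mem_univ j) hij ?_]
        · congr 1
          · rw [Finset.sum_eq_add_of_mem i j (Finset.mem_univ i) (Finset.mem_univ j) hij ?_]
            · simp [hij, Ne.symm hij]
            · intro l _ h1; simp [h1.1, h1.2]
          · rw [Finset.sum_eq_add_of_mem i j (Finset.mem_univ i) (Finset.mem_univ j) hij ?_]
            · simp [hij, Ne.symm hij]
            · intro l _ h1; simp [h1.1, h1.2]
        · intro k _ h1
          rw [Finset.sum_eq_zero]; intro l _; simp [h1.1, h1.2]
      simp only [mul_assoc] at h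
      rw [collapse] at h
      have hsq : (∑ k, (if k = i then p i else if k = j then - p j else 0)^2)
          = (p i)^2 + (p j)^2 := by
        rw [Finset.sum_eq_add_of_mem i j (Finset.mem_univ i) (Finset.mem_univ j) hij ?_]
        · simp [hij, Ne.symm hij]
        · intro k _ h1; simp [h1.1, h1.2]
      rw [hsq] at h
      have eii : P i i = M - B i i := by simp [P]
      have ejj : P j j = M - B j j := by simp [P]
      have eij : P i j = - B i j := by simp [P, hij]
      have eji : P j i = - B j i := by simp [P, Ne.symm hij]
      rw [eii, ejj, eij, eji]
      nlinarith [h]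
  have hSp0 : (0:ℝ) ≤ ∑ i, (p i)^2 := Finset.sum_nonneg (fun i _ => sq_nonneg _)
  have hPPval : (∑ i, ∑ j, p i * p j * P i j)
      = M * (∑ i, (p i)^2) - (∑ i, ∑ j, p i * p j * B i j) := by
    simp only [P, mul_sub, Finset.sum_sub_distrib]
    congr 1
    have : ∀ i : Fin m, (∑ j, p i * p j * (if i = j then M else 0)) = (p i)^2 * M := by
      intro i
      simp only [mul_ite, mul_zero]
      rw [Finset.sum_ite_eq univ i (fun j => p i * p j * M)]
      simp [sq]
    rw [Finset.sum_congr rfl (fun i _ => this i), ← Finset.sum_mul]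
    ring
  have h2PP : (∑ i, ∑ j, (p i * p j * P i j + p j * p i * P j i))
      = 2 * ∑ i, ∑ j, p i * p j * P i j := by
    simp only [Finset.sum_add_distrib]
    rw [Finset.sum_comm (f := fun i j => p j * p i * P j i)]
    ring
  have hbound : (∑ i, ∑ j, (p i * p j * P i j + p j * p i * P j i))
      ≤ ∑ i, ∑ j, ((p i)^2 * P i i + (p j)^2 * P j j) :=
    Finset.sum_le_sum (fun i _ => Finset.sum_le_sum (fun j _ => hpair i j))
  have hrhs : (∑ i, ∑ j, ((p i)^2 * P i i + (p j)^2 * P j j))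
      = 2 * ((m : ℝ) * ∑ i, (p i)^2 * P i i) := by
    simp only [Finset.sum_add_distrib, Finset.sum_const, Finset.card_univ, Fintype.card_fin,
      nsmul_eq_mul]
    rw [← Finset.mul_sum]
    ring
  have hstep : (∑ i, (p i)^2 * P i i) ≤ (∑ i, (p i)^2) * (∑ i, P i i) := by
    rw [Finset.sum_mul]
    refine Finset.sum_le_sum (fun i _ => ?_)
    exact mul_le_mul_of_nonneg_left
      (Finset.single_le_sum (fun j _ => hdiag j) (Finset.mem_univ i)) (sq_nonneg _)
  have htrP : (∑ i, P i i) = (m : ℝ) * M - (∑ i, B i i) := by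
    simp [P, Finset.sum_sub_distrib, Finset.sum_const, Finset.card_univ]
  have hTle : (∑ i, B i i) ≤ (m : ℝ) * M := by
    have := Finset.sum_nonneg (fun i (_ : i ∈ univ) => hdiag i)
    rw [htrP] at this; linarith
  have hA : M * (∑ i, (p i)^2) - (∑ i, ∑ j, p i * p j * B i j)
      ≤ (m : ℝ) * ((∑ i, (p i)^2) * ((m : ℝ) * M - (∑ i, B i i))) := by
    have h1 : 2 * (∑ i, ∑ j, p i * p j * P i j)
        ≤ 2 * ((m : ℝ) * ∑ i, (p i)^2 * P i i) := by
      rw [← h2PP, ← hrhs]; exact hbound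
    have h2 : (∑ i, (p i)^2 * P i i) ≤ (∑ i, (p i)^2) * ((m : ℝ) * M - (∑ i, B i i)) := by
      rw [← htrP]; exact hstep
    rw [hPPval] at h1
    nlinarith [h1, h2, (Nat.cast_nonneg m : (0:ℝ) ≤ (m:ℝ))]
  have hA' : β * (M * (∑ i, (p i)^2) - (∑ i, ∑ j, p i * p j * B i j))
      ≤ β * ((m : ℝ) * ((∑ i, (p i)^2) * ((m : ℝ) * M - (∑ i, B i i)))) :=
    mul_le_mul_of_nonneg_left hA hβ
  have hmM : (0:ℝ) ≤ (m : ℝ) * M := mul_nonneg (Nat.cast_nonneg m) hM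
  nlinarith [hA', mul_nonneg (sub_nonneg.2 hβp) (sub_nonneg.2 hTle),
    mul_nonneg (mul_nonneg hβ hSp0) hM,
    mul_nonneg (sub_nonneg.2 hc1) hmM, hβp, hTle, hc0, hc1, hM, hSp0]

variable {m : ℕ}

lemma norm_sq_sum (y : EuclideanSpace ℝ (Fin m)) : ‖y‖^2 = ∑ i, (y i)^2 := by
  rw [EuclideanSpace.norm_eq, Real.sq_sqrt (Finset.sum_nonneg fun i _ => sq_nonneg _)]
  simp [sq_abs]

lemma grad_apply (u : EuclideanSpace ℝ (Fin m) → ℝ) (y : EuclideanSpace ℝ (Fin m)) (i : Fin m) :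
    gradient u y i = fderiv ℝ u y (EuclideanSpace.single i 1) := by
  have h1 : gradient u y i = @inner ℝ _ _ (EuclideanSpace.single i (1:ℝ)) (gradient u y) := by
    rw [EuclideanSpace.inner_single_left]; simp
  rw [h1, real_inner_comm, gradient, InnerProductSpace.toDual_symm_apply]

lemma sum_coord_apply (z : Fin m → EuclideanSpace ℝ (Fin m)) (j : Fin m) :
    (∑ i, z i) j = ∑ i, z i j := by
  induction (univ : Finset (Fin m)) using Finset.induction_on with
  | empty => simp
  | @insert a s h ih => rw [Finset.sum_insert h, Finset.sum_insert h, ← ih]; rfl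

lemma decomp (y : EuclideanSpace ℝ (Fin m)) :
    y = ∑ i, y i • EuclideanSpace.single i (1:ℝ) := by
  ext j
  rw [sum_coord_apply]
  simp [EuclideanSpace.single_apply]

noncomputable def dn2 (x : EuclideanSpace ℝ (Fin m)) : EuclideanSpace ℝ (Fin m) →L[ℝ] ℝ :=
  ∑ i, (2 * x i) • (EuclideanSpace.proj i : EuclideanSpace ℝ (Fin m) →L[ℝ] ℝ)

lemma hasFDerivAt_n2 (x : EuclideanSpace ℝ (Fin m)) :
    HasFDerivAt (fun y : EuclideanSpace ℝ (Fin m) => ∑ i, (y i)^2) (dn2 x) x := by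
  apply HasFDerivAt.fun_sum
  intro i _
  have h := ((EuclideanSpace.proj i : EuclideanSpace ℝ (Fin m) →L[ℝ] ℝ).hasFDerivAt
    (x := x)).mul ((EuclideanSpace.proj i : EuclideanSpace ℝ (Fin m) →L[ℝ] ℝ).hasFDerivAt (x := x))
  have h2 : (fun y : EuclideanSpace ℝ (Fin m) => (y i)^2)
      = fun y => (EuclideanSpace.proj i : EuclideanSpace ℝ (Fin m) →L[ℝ] ℝ) y
        * (EuclideanSpace.proj i : EuclideanSpace ℝ (Fin m) →L[ℝ] ℝ) y := by
    funext y; simp [sq]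
  rw [h2]
  refine h.congr_fderiv ?_
  have : (EuclideanSpace.proj i : EuclideanSpace ℝ (Fin m) →L[ℝ] ℝ) x = x i := rfl
  rw [this]
  module

lemma dn2_apply (x : EuclideanSpace ℝ (Fin m)) (v : EuclideanSpace ℝ (Fin m)) :
    dn2 x v = ∑ i, 2 * x i * v i := by
  simp [dn2]

noncomputable def eV (m : ℕ) (i : Fin m) : EuclideanSpace ℝ (Fin m) :=
  EuclideanSpace.single i (1:ℝ)

lemma mc_formula (α : ℝ) (u : EuclideanSpace ℝ (Fin m) → ℝ) (hu : ContDiff ℝ 2 u)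
    (x : EuclideanSpace ℝ (Fin m)) :
    meanCurvatureOp α u x =
      (1 + ∑ i, (fderiv ℝ u x (eV m i))^2) ^ (-α) *
        (∑ i, fderiv ℝ (fderiv ℝ u) x (eV m i) (eV m i))
      + (-α * (1 + ∑ i, (fderiv ℝ u x (eV m i))^2) ^ (-α-1)) * (2 *
        (∑ i, ∑ j, fderiv ℝ u x (eV m i) * fderiv ℝ u x (eV m j) *
          fderiv ℝ (fderiv ℝ u) x (eV m i) (eV m j))) := by
  classical
  set D := fderiv ℝ u with hDdef
  have hud : Differentiable ℝ u := hu.differentiable (by norm_num)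
  have hDc : ContDiff ℝ 1 D := hu.fderiv_right (by norm_num)
  have hD2 : HasFDerivAt D (fderiv ℝ D x) x :=
    ((hDc.differentiable one_ne_zero) x).hasFDerivAt
  set D2 := fderiv ℝ D x with hD2def
  set p : Fin m → ℝ := fun i => D x (eV m i) with hp
  set N : ℝ := ∑ j, (p j)^2 with hN
  have hN0 : 0 ≤ N := Finset.sum_nonneg fun j _ => sq_nonneg _
  have h1N : (0:ℝ) < 1 + N := by linarith
  -- derivative of y ↦ D y v
  have hDj : ∀ v : EuclideanSpace ℝ (Fin m), HasFDerivAt (fun y => D y v)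
      ((ContinuousLinearMap.apply ℝ ℝ v).comp D2) x := by
    intro v
    exact ((ContinuousLinearMap.apply ℝ ℝ v).hasFDerivAt).comp x hD2
  set dN : EuclideanSpace ℝ (Fin m) →L[ℝ] ℝ :=
    ∑ j, (2 * p j) • ((ContinuousLinearMap.apply ℝ ℝ (eV m j)).comp D2) with hdN
  have hNder : HasFDerivAt (fun y => ∑ j, (D y (eV m j))^2) dN x := by
    apply HasFDerivAt.fun_sum
    intro j _
    have h := (hDj (eV m j)).mul (hDj (eV m j))
    have h2 : (fun y => (D y (eV m j))^2) = fun y => D y (eV m j) * D y (eV m j) := by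
      funext y; ring
    rw [h2]
    refine h.congr_fderiv ?_
    module
  have hwd : HasDerivAt (fun s : ℝ => (1+s) ^ (-α)) (-α * (1 + N)^(-α-1)) N := by
    have hb : HasDerivAt (fun s : ℝ => 1 + s) 1 N := by
      simpa using (hasDerivAt_id N).const_add (1:ℝ)
    have := hb.rpow_const (p := -α) (Or.inl (ne_of_gt h1N))
    simpa [mul_comm] using this
  have hc : HasFDerivAt (fun y => (1 + ∑ j, (D y (eV m j))^2) ^ (-α))
      ((-α * (1 + N)^(-α-1)) • dN) x := by
    exact hwd.comp_hasFDerivAt x hNder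
  have hXi : ∀ i, HasFDerivAt (fun y => (1 + ∑ j, (D y (eV m j))^2) ^ (-α) * (D y (eV m i)))
      (((1 + N) ^ (-α)) • ((ContinuousLinearMap.apply ℝ ℝ (eV m i)).comp D2)
        + (p i) • ((-α * (1 + N)^(-α-1)) • dN)) x := by
    intro i
    exact hc.mul (hDj (eV m i))
  -- identify the function inside meanCurvatureOp
  have hfun : ∀ i : Fin m, (fun y => (((1 + ‖gradient u y‖ ^ 2) ^ α)⁻¹ • gradient u y) i)
      = fun y => (1 + ∑ j, (D y (eV m j))^2) ^ (-α) * (D y (eV m i)) := by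
    intro i
    funext y
    have hns : ∀ j, gradient u y j = D y (eV m j) := fun j => grad_apply u y j
    have e1 : ‖gradient u y‖^2 = ∑ j, (D y (eV m j))^2 := by
      rw [norm_sq_sum]; exact Finset.sum_congr rfl fun j _ => by rw [hns j]
    have e2 : (0:ℝ) ≤ 1 + ∑ j, (D y (eV m j))^2 := by positivity
    show ((1 + ‖gradient u y‖ ^ 2) ^ α)⁻¹ * (gradient u y i)
        = (1 + ∑ j, (D y (eV m j))^2) ^ (-α) * (D y (eV m i))
    rw [e1, hns i, Real.rpow_neg e2]
  have hmc : meanCurvatureOp α u x = ∑ i,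
      (((1 + N) ^ (-α)) • ((ContinuousLinearMap.apply ℝ ℝ (eV m i)).comp D2)
        + (p i) • ((-α * (1 + N)^(-α-1)) • dN)) (eV m i) := by
    unfold meanCurvatureOp euclideanDiv
    refine Finset.sum_congr rfl fun i _ => ?_
    have hb : (fun y => (((1 + ‖gradient u y‖ ^ 2) ^ α)⁻¹ • gradient u y) i)
        = fun y => (1 + ∑ j, (D y (eV m j))^2) ^ (-α) * (D y (eV m i)) := hfun i
    rw [hb, (hXi i).fderiv]
    rfl
  have heval : ∀ i, (((1 + N) ^ (-α)) • ((ContinuousLinearMap.apply ℝ ℝ (eV m i)).comp D2)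
        + (p i) • ((-α * (1 + N)^(-α-1)) • dN)) (eV m i)
      = (1 + N) ^ (-α) * (D2 (eV m i) (eV m i))
        + p i * ((-α * (1 + N)^(-α-1)) * (∑ j, 2 * p j * (D2 (eV m i) (eV m j)))) := by
    intro i
    simp only [ContinuousLinearMap.add_apply, ContinuousLinearMap.smul_apply,
      ContinuousLinearMap.comp_apply, ContinuousLinearMap.apply_apply, hdN,
      ContinuousLinearMap.sum_apply, smul_eq_mul, Finset.mul_sum]
  calc meanCurvatureOp α u x
      = ∑ i, (((1 + N) ^ (-α)) • ((ContinuousLinearMap.apply ℝ ℝ (eV m i)).comp D2)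
        + (p i) • ((-α * (1 + N)^(-α-1)) • dN)) (eV m i) := hmc
    _ = ∑ i, ((1 + N) ^ (-α) * (D2 (eV m i) (eV m i))
        + p i * ((-α * (1 + N)^(-α-1)) * (∑ j, 2 * p j * (D2 (eV m i) (eV m j))))) :=
        Finset.sum_congr rfl fun i _ => heval i
    _ = (1 + N) ^ (-α) * (∑ i, D2 (eV m i) (eV m i))
        + (-α * (1 + N)^(-α-1)) * (2 * ∑ i, ∑ j, p i * p j * D2 (eV m i) (eV m j)) := by
        rw [Finset.sum_add_distrib]
        congr 1
        · rw [Finset.mul_sum]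
        · simp only [Finset.mul_sum]
          exact Finset.sum_congr rfl fun i _ => Finset.sum_congr rfl fun j _ => by ring

lemma deriv2_nonpos_at_max {φ φ' : ℝ → ℝ} {q : ℝ}
    (hd : ∀ t, HasDerivAt φ (φ' t) t) (h2 : HasDerivAt φ' q 0)
    (hmax : ∀ t, φ t ≤ φ 0) : q ≤ 0 := by
  by_contra hq
  push_neg at hq
  have h0 : φ' 0 = 0 := by
    have hl : IsLocalMax φ 0 := Filter.Eventually.of_forall hmax
    exact hl.hasDerivAt_eq_zero (hd 0)
  have hslope : Tendsto (slope φ' 0) (nhdsWithin 0 {(0:ℝ)}ᶜ) (nhds q) :=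
    hasDerivAt_iff_tendsto_slope.1 h2
  have hev : ∀ᶠ t in nhdsWithin 0 {(0:ℝ)}ᶜ, 0 < slope φ' 0 t :=
    hslope.eventually (eventually_gt_nhds hq)
  have hev' : ∀ᶠ t in nhdsWithin (0:ℝ) (Set.Ioi 0), 0 < slope φ' 0 t :=
    hev.filter_mono (nhdsWithin_mono 0 (fun t ht => ne_of_gt ht))
  rw [eventually_iff, mem_nhdsGT_iff_exists_Ioc_subset] at hev'
  obtain ⟨δ, hδ, hsub⟩ := hev'
  have hδ0 : (0:ℝ) < δ := hδ
  have hpos : ∀ t ∈ Set.Ioo (0:ℝ) δ, 0 < φ' t := by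
    intro t ht
    have hs := hsub ⟨ht.1, le_of_lt ht.2⟩
    have : slope φ' 0 t = φ' t / t := by
      rw [slope_def_field, h0]; simp
    rw [Set.mem_setOf_eq, this] at hs
    have := mul_pos hs ht.1
    rwa [div_mul_cancel₀] at this
    exact ne_of_gt ht.1
  have hmono : StrictMonoOn φ (Set.Icc 0 δ) := by
    apply strictMonoOn_of_deriv_pos (convex_Icc 0 δ)
    · exact fun t _ => (hd t).continuousAt.continuousWithinAt
    · intro t ht
      rw [interior_Icc] at ht
      rw [(hd t).deriv]
      exact hpos t ht
  have := hmono (Set.left_mem_Icc.2 (le_of_lt hδ0)) (Set.right_mem_Icc.2 (le_of_lt hδ0)) hδ0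
  exact absurd (hmax δ) (not_le.2 this)

lemma hess_bound {u : EuclideanSpace ℝ (Fin m) → ℝ} (hu : ContDiff ℝ 2 u) {ε : ℝ} (hε : 0 < ε)
    {x : EuclideanSpace ℝ (Fin m)}
    (hmax : ∀ y, u y - ε * Real.log (1 + ∑ i, (y i)^2)
      ≤ u x - ε * Real.log (1 + ∑ i, (x i)^2))
    (v : EuclideanSpace ℝ (Fin m)) :
    fderiv ℝ (fderiv ℝ u) x v v ≤ ε * (2 * (∑ i, (v i)^2) / (1 + ∑ i, (x i)^2)) := by
  classical
  have hud : Differentiable ℝ u := hu.differentiable (by norm_num)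
  have hDc : ContDiff ℝ 1 (fderiv ℝ u) := hu.fderiv_right (by norm_num)
  set D := fderiv ℝ u with hDdef
  set D2 := fderiv ℝ D x with hD2def
  set c : ℝ := 1 + ∑ i, (x i)^2 with hc
  set b : ℝ := ∑ i, 2 * x i * v i with hb
  set a : ℝ := ∑ i, (v i)^2 with ha
  have ha0 : 0 ≤ a := Finset.sum_nonneg fun i _ => sq_nonneg _
  have hc0 : 0 < c := by
    have : (0:ℝ) ≤ ∑ i, (x i)^2 := Finset.sum_nonneg fun i _ => sq_nonneg _
    rw [hc]; linarith
  have hline : ∀ t : ℝ, (1 + ∑ i, ((x + t • v) i)^2) = c + b * t + a * t^2 := by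
    intro t
    have h1 : ∀ i, ((x + t • v) i) = x i + t * v i := fun i => rfl
    have h2 : (∑ i, ((x + t • v) i)^2)
        = ∑ i, ((x i)^2 + (2 * x i * v i) * t + (v i)^2 * t^2) := by
      refine Finset.sum_congr rfl fun i _ => ?_
      rw [h1 i]; ring
    rw [h2, Finset.sum_add_distrib, Finset.sum_add_distrib, ← Finset.sum_mul, ← Finset.sum_mul]
    rw [hc, hb, ha]; ring
  have hP : ∀ t : ℝ, 0 < c + b * t + a * t^2 := by
    intro t
    rw [← hline t]
    have : (0:ℝ) ≤ ∑ i, ((x + t • v) i)^2 := Finset.sum_nonneg fun i _ => sq_nonneg _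
    linarith
  have hlinet : ∀ t : ℝ, HasDerivAt (fun s : ℝ => x + s • v) v t := by
    intro t
    simpa using ((hasDerivAt_id t).smul_const v).const_add x
  have hd1 : ∀ t : ℝ, HasDerivAt (fun s => u (x + s • v)) (D (x + t • v) v) t := by
    intro t
    exact ((hud (x + t • v)).hasFDerivAt).comp_hasDerivAt t (hlinet t)
  have hd2 : HasDerivAt (fun t : ℝ => D (x + t • v) v) (D2 v v) (0:ℝ) := by
    have hx0 : x + (0:ℝ) • v = x := by rw [zero_smul, add_zero]
    have hD2' : HasFDerivAt D D2 (x + (0:ℝ) • v) := by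
      rw [hx0]; exact ((hDc.differentiable one_ne_zero) x).hasFDerivAt
    have hDl : HasDerivAt (fun t : ℝ => D (x + t • v)) (D2 v) 0 :=
      hD2'.comp_hasDerivAt 0 (hlinet 0)
    have h := ((ContinuousLinearMap.apply ℝ ℝ v).hasFDerivAt).comp_hasDerivAt (0:ℝ) hDl
    exact h
  have hpoly : ∀ t : ℝ, HasDerivAt (fun s : ℝ => c + b * s + a * s^2) (b + 2 * a * t) t := by
    intro t
    have h := (((hasDerivAt_id t).const_mul b).const_add c).add
      ((hasDerivAt_pow 2 t).const_mul a)
    exact h.congr_deriv (by ring)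
  have hG1 : ∀ t : ℝ, HasDerivAt (fun s => Real.log (c + b * s + a * s^2))
      ((b + 2 * a * t) / (c + b * t + a * t^2)) t := by
    intro t
    have h := (Real.hasDerivAt_log (ne_of_gt (hP t))).comp t (hpoly t)
    exact h.congr_deriv (by ring)
  have hG2 : HasDerivAt (fun t => (b + 2 * a * t) / (c + b * t + a * t^2))
      ((2 * a * c - b * b) / c^2) 0 := by
    have hnum : HasDerivAt (fun t : ℝ => b + 2 * a * t) (2 * a) 0 := by
      simpa using ((hasDerivAt_id (0:ℝ)).const_mul (2*a)).const_add b
    have h := hnum.div (hpoly 0) (ne_of_gt (hP 0))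
    exact h.congr_deriv (by ring)
  have hmax' : ∀ t : ℝ, u (x + t • v) - ε * Real.log (c + b * t + a * t^2)
      ≤ u (x + (0:ℝ) • v) - ε * Real.log (c + b * 0 + a * 0^2) := by
    intro t
    have hx0 : x + (0:ℝ) • v = x := by rw [zero_smul, add_zero]
    rw [hx0, ← hline t]
    have h0 : c + b * 0 + a * 0^2 = 1 + ∑ i, (x i)^2 := by rw [hc]; ring
    rw [h0]
    exact hmax (x + t • v)
  have key : D2 v v - ε * ((2 * a * c - b * b) / c^2) ≤ 0 := by
    apply deriv2_nonpos_at_max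
      (φ' := fun t => D (x + t • v) v - ε * ((b + 2 * a * t) / (c + b * t + a * t^2)))
    · intro t
      exact (hd1 t).sub ((hG1 t).const_mul ε)
    · exact hd2.sub (hG2.const_mul ε)
    · exact hmax'
  have hfrac : (2 * a * c - b * b) / c^2 ≤ 2 * a / c := by
    rw [div_le_div_iff₀ (by positivity) hc0]
    nlinarith [sq_nonneg b, hc0]
  calc D2 v v ≤ ε * ((2 * a * c - b * b) / c^2) := by linarith
    _ ≤ ε * (2 * a / c) := by
        exact mul_le_mul_of_nonneg_left hfrac (le_of_lt hε)

lemma g_continuous : Continuous (fun y : EuclideanSpace ℝ (Fin m) =>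
    Real.log (1 + ∑ i, (y i)^2)) := by
  have hsum : Continuous (fun y : EuclideanSpace ℝ (Fin m) => 1 + ∑ i, (y i)^2) := by
    refine Continuous.add continuous_const ?_
    refine continuous_finset_sum _ fun i _ => ?_
    exact ((EuclideanSpace.proj (𝕜 := ℝ) i).continuous).pow 2
  refine Continuous.log hsum fun y => ?_
  have : (0:ℝ) ≤ ∑ i, (y i)^2 := Finset.sum_nonneg fun i _ => sq_nonneg _
  positivity

lemma exists_max {u : EuclideanSpace ℝ (Fin m) → ℝ} (hu : Continuous u) {ustar : ℝ}
    (hup : ∀ y, u y ≤ ustar) {ε : ℝ} (hε : 0 < ε) :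
    ∃ x : EuclideanSpace ℝ (Fin m), ∀ y : EuclideanSpace ℝ (Fin m),
      u y - ε * Real.log (1 + ∑ i, (y i)^2) ≤ u x - ε * Real.log (1 + ∑ i, (x i)^2) := by
  classical
  set g : EuclideanSpace ℝ (Fin m) → ℝ := fun y => Real.log (1 + ∑ i, (y i)^2) with hg
  set h : EuclideanSpace ℝ (Fin m) → ℝ := fun y => u y - ε * g y with hh
  have hgc : Continuous g := g_continuous
  have hhc : Continuous h := hu.sub (continuous_const.mul hgc)
  have hg0 : ∀ y, 0 ≤ g y := by
    intro y
    have h1 : (0:ℝ) ≤ ∑ i, (y i)^2 := Finset.sum_nonneg fun i _ => sq_nonneg _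
    have : (1:ℝ) ≤ 1 + ∑ i, (y i)^2 := by linarith
    exact Real.log_nonneg this
  set R : ℝ := Real.sqrt (Real.exp ((ustar - h 0) / ε)) with hR
  have hR0 : 0 ≤ R := Real.sqrt_nonneg _
  have houtside : ∀ y : EuclideanSpace ℝ (Fin m), R ≤ ‖y‖ → h y ≤ h 0 := by
    intro y hy
    have hsq : Real.exp ((ustar - h 0) / ε) ≤ ∑ i, (y i)^2 := by
      have h1 : R^2 ≤ ‖y‖^2 := by
        apply sq_le_sq' _ hy
        linarith [norm_nonneg y]
      rw [norm_sq_sum] at h1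
      rw [hR] at h1
      rwa [Real.sq_sqrt (le_of_lt (Real.exp_pos _))] at h1
    have hlog : (ustar - h 0) / ε ≤ g y := by
      rw [hg]
      calc (ustar - h 0) / ε = Real.log (Real.exp ((ustar - h 0) / ε)) :=
            (Real.log_exp _).symm
        _ ≤ Real.log (1 + ∑ i, (y i)^2) := by
            apply Real.log_le_log (Real.exp_pos _)
            linarith
    have hcan : ε * ((ustar - h 0)/ε) = ustar - h 0 := by field_simp
    have h2 : ustar - h 0 ≤ ε * g y := by
      have := mul_le_mul_of_nonneg_left hlog (le_of_lt hε)
      rw [hcan] at this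
      linarith
    have h3 := hup y
    show u y - ε * g y ≤ h 0
    linarith
  obtain ⟨x, _, hx⟩ := (isCompact_closedBall (0 : EuclideanSpace ℝ (Fin m)) R).exists_isMaxOn
    ⟨0, Metric.mem_closedBall_self hR0⟩ hhc.continuousOn
  refine ⟨x, fun y => ?_⟩
  by_cases hy : ‖y‖ ≤ R
  · exact hx (by simpa [Metric.mem_closedBall, dist_eq_norm] using hy)
  · push_neg at hy
    calc h y ≤ h 0 := houtside y (le_of_lt hy)
      _ ≤ h x := hx (Metric.mem_closedBall_self hR0)

lemma grad_at_max {u : EuclideanSpace ℝ (Fin m) → ℝ} (hu : ContDiff ℝ 2 u) {ε : ℝ}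
    {x : EuclideanSpace ℝ (Fin m)}
    (hmax : ∀ y, u y - ε * Real.log (1 + ∑ i, (y i)^2)
      ≤ u x - ε * Real.log (1 + ∑ i, (x i)^2)) (i : Fin m) :
    fderiv ℝ u x (eV m i) = ε * ((1 + ∑ j, (x j)^2)⁻¹ * (2 * x i)) := by
  classical
  have hud : Differentiable ℝ u := hu.differentiable (by norm_num)
  have hS0 : (0:ℝ) ≤ ∑ j, (x j)^2 := Finset.sum_nonneg fun j _ => sq_nonneg _
  have hSpos : (0:ℝ) < 1 + ∑ j, (x j)^2 := by linarith
  have hgd : HasFDerivAt (fun y : EuclideanSpace ℝ (Fin m) => Real.log (1 + ∑ j, (y j)^2))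
      ((1 + ∑ j, (x j)^2)⁻¹ • dn2 x) x := by
    have hn : HasFDerivAt (fun y : EuclideanSpace ℝ (Fin m) => 1 + ∑ j, (y j)^2) (dn2 x) x :=
      (hasFDerivAt_n2 x).const_add 1
    exact (Real.hasDerivAt_log (ne_of_gt hSpos)).comp_hasFDerivAt x hn
  have hfd : HasFDerivAt (fun y => u y - ε * Real.log (1 + ∑ j, (y j)^2))
      (fderiv ℝ u x - ε • ((1 + ∑ j, (x j)^2)⁻¹ • dn2 x)) x :=
    (hud x).hasFDerivAt.sub (hgd.const_mul ε)
  have hlm : IsLocalMax (fun y => u y - ε * Real.log (1 + ∑ j, (y j)^2)) x :=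
    Filter.Eventually.of_forall fun y => hmax y
  have hzero : fderiv ℝ u x - ε • ((1 + ∑ j, (x j)^2)⁻¹ • dn2 x) = 0 := by
    rw [← hfd.fderiv]
    exact hlm.fderiv_eq_zero
  have heq : fderiv ℝ u x = ε • ((1 + ∑ j, (x j)^2)⁻¹ • dn2 x) := by
    rwa [sub_eq_zero] at hzero
  rw [heq]
  have hdn : dn2 x (eV m i) = 2 * x i := by
    rw [dn2_apply]
    rw [Finset.sum_eq_single i (fun j _ hj => by
      have : (eV m i) j = 0 := by
        simp [eV, EuclideanSpace.single_apply, hj]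
      rw [this, mul_zero]) (by simp)]
    have : (eV m i) i = 1 := by simp [eV, EuclideanSpace.single_apply]
    rw [this, mul_one]
  simp only [ContinuousLinearMap.smul_apply, smul_eq_mul, hdn]

lemma b_lower {Q : ℝ → ℝ} (hQpos : ∀ t > (0:ℝ), 0 < Q t)
    (hQmono : ∀ s t : ℝ, 0 < s → s ≤ t → Q s ≤ Q t)
    {b : EuclideanSpace ℝ (Fin m) → ℝ} (hb : Continuous b)
    (hbQ : ∀ x : EuclideanSpace ℝ (Fin m), 0 < ‖x‖ → 1 / Q ‖x‖ ≤ b x)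
    (hm : 0 < m) (x : EuclideanSpace ℝ (Fin m)) :
    1 / Q (max ‖x‖ 1) ≤ b x := by
  by_cases hx : 0 < ‖x‖
  · have h1 : Q ‖x‖ ≤ Q (max ‖x‖ 1) := hQmono _ _ hx (le_max_left _ _)
    have h2 : 1 / Q (max ‖x‖ 1) ≤ 1 / Q ‖x‖ :=
      one_div_le_one_div_of_le (hQpos _ hx) h1
    exact le_trans h2 (hbQ x hx)
  · have hx0 : x = 0 := by
      push_neg at hx
      exact norm_eq_zero.1 (le_antisymm hx (norm_nonneg x))
    subst hx0
    simp only [norm_zero]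
    have hmax : max (0:ℝ) 1 = 1 := by norm_num
    rw [hmax]
    set i₀ : Fin m := ⟨0, hm⟩
    set z : ℕ → EuclideanSpace ℝ (Fin m) :=
      fun n => ((1:ℝ)/(n+1)) • EuclideanSpace.single i₀ 1 with hz
    have hzn : ∀ n, ‖z n‖ = 1/(n+1) := by
      intro n
      rw [hz]
      simp only [norm_smul, EuclideanSpace.norm_single, norm_one, mul_one]
      rw [Real.norm_eq_abs, abs_of_pos (by positivity)]
    have hztend : Tendsto z atTop (nhds 0) := by
      have h1 : Tendsto (fun n : ℕ => (1:ℝ)/(n+1)) atTop (nhds 0) :=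
        tendsto_one_div_add_atTop_nhds_zero_nat
      have := h1.smul_const (EuclideanSpace.single i₀ (1:ℝ))
      simpa [hz, one_div] using this
    have hbz : Tendsto (fun n => b (z n)) atTop (nhds (b 0)) :=
      (hb.tendsto 0).comp hztend
    refine ge_of_tendsto' hbz fun n => ?_
    have hn0 : 0 < ‖z n‖ := by rw [hzn n]; positivity
    have hn1 : ‖z n‖ ≤ 1 := by
      rw [hzn n]
      rw [div_le_one (by positivity)]
      linarith [Nat.cast_nonneg (α := ℝ) n]
    have hQle : Q ‖z n‖ ≤ Q 1 := hQmono _ _ hn0 hn1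
    have h2 : 1 / Q 1 ≤ 1 / Q ‖z n‖ := one_div_le_one_div_of_le (hQpos _ hn0) hQle
    exact le_trans h2 (hbQ (z n) hn0)


set_option maxHeartbeats 2000000 in
theorem stmt5 {m : ℕ} (hm : 2 ≤ m) (α : ℝ) (hα : 0 < α)
    (Q : ℝ → ℝ)
    (hQpos : ∀ t > (0:ℝ), 0 < Q t)
    (hQmono : ∀ s t : ℝ, 0 < s → s ≤ t → Q s ≤ Q t)
    (hQo : Q =o[atTop] fun t => t ^ 2)
    (hliminf : ∃ C : ℝ, ∃ᶠ r in atTop, Q r * Real.log r / r ^ 2 ≤ C)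
    (b : EuclideanSpace ℝ (Fin m) → ℝ) (hb : Continuous b)
    (hbQ : ∀ x : EuclideanSpace ℝ (Fin m), 0 < ‖x‖ → 1 / Q ‖x‖ ≤ b x)
    (f : ℝ → ℝ) (hf : Continuous f)
    (u : EuclideanSpace ℝ (Fin m) → ℝ) (hu : ContDiff ℝ 2 u)
    (hbdd : BddAbove (Set.range u))
    (γ : ℝ) (hγ : γ < ⨆ x, u x)
    (hineq : ∀ x : EuclideanSpace ℝ (Fin m), γ < u x →
      b x * f (u x) ≤ meanCurvatureOp α u x) :
    f (⨆ x, u x) ≤ 0 := by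
  classical
  by_contra hf0
  push_neg at hf0
  have hm0 : (0:ℝ) < (m:ℝ) := by
    have : (0:ℕ) < m := by omega
    exact_mod_cast this
  set ustar : ℝ := ⨆ x, u x with hustar
  have hup : ∀ y, u y ≤ ustar := fun y => le_ciSup hbdd y
  set K : ℝ := f ustar / 2 with hKdef
  have hK0 : 0 < K := by
    rw [hKdef]; linarith
  -- continuity of f near ustar
  have hev : ∀ᶠ t in nhds ustar, K < f t :=
    (hf.tendsto ustar).eventually (eventually_gt_nhds (by rw [hKdef]; linarith))
  obtain ⟨δ, hδ0, hδ⟩ := Metric.eventually_nhds_iff.1 hev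
  set η : ℝ := δ/2 with hηdef
  have hη0 : 0 < η := by rw [hηdef]; linarith
  -- base point
  set θ : ℝ := max γ (ustar - η) with hθdef
  have hθlt : θ < ustar := by
    rw [hθdef]
    exact max_lt hγ (by linarith)
  obtain ⟨w0, hw0⟩ : ∃ y, θ < u y := exists_lt_of_lt_ciSup hθlt
  set G0 : ℝ := Real.log (1 + ∑ i, (w0 i)^2) with hG0def
  have hG00 : 0 ≤ G0 := by
    rw [hG0def]
    apply Real.log_nonneg
    have : (0:ℝ) ≤ ∑ i, (w0 i)^2 := Finset.sum_nonneg fun i _ => sq_nonneg _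
    linarith
  set C0 : ℝ := ustar - u w0 with hC0def
  have hC00 : 0 ≤ C0 := by rw [hC0def]; linarith [hup w0]
  set C1 : ℝ := C0 + G0 with hC1def
  have hC10 : 0 ≤ C1 := by rw [hC1def]; linarith
  set c1 : ℝ := K / ((m:ℝ) * (C1 + 1)) with hc1def
  have hc10 : 0 < c1 := by
    rw [hc1def]
    apply div_pos hK0
    apply mul_pos hm0
    linarith
  -- littleO instantiation
  have hQo2 : ∀ᶠ r in atTop, ‖Q r‖ ≤ c1/2 * ‖r^2‖ :=
    (isLittleO_iff.1 hQo) (by positivity)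
  obtain ⟨R2, hR2⟩ := eventually_atTop.1 hQo2
  -- target radius
  set S : ℝ := max R2 3 with hSdef
  have hS3 : (3:ℝ) ≤ S := le_max_right _ _
  have hS0 : (0:ℝ) < S := by linarith
  have hQS : 0 < Q S := hQpos S hS0
  -- choice of epsilon
  set ε : ℝ := min (min 1 (1/(2*α*(m:ℝ))))
    (min ((u w0 - θ)/(2*(G0+1))) (K/(2*(m:ℝ)*Q S + 1))) with hεdef
  have hε0 : 0 < ε := by
    rw [hεdef]
    apply lt_min
    · apply lt_min one_pos
      positivity
    · apply lt_min
      · apply div_pos (by linarith) (by linarith)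
      · apply div_pos hK0 (by positivity)
  have hε1 : ε ≤ 1 := le_trans (min_le_left _ _) (min_le_left _ _)
  have hεα : ε ≤ 1/(2*α*(m:ℝ)) := le_trans (min_le_left _ _) (min_le_right _ _)
  have hεθ : ε ≤ (u w0 - θ)/(2*(G0+1)) := le_trans (min_le_right _ _) (min_le_left _ _)
  have hεQS : ε ≤ K/(2*(m:ℝ)*Q S + 1) := le_trans (min_le_right _ _) (min_le_right _ _)
  -- max point
  obtain ⟨x, hmax⟩ := exists_max hu.continuous hup hε0
  set Sx : ℝ := ∑ i, (x i)^2 with hSxdef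
  have hSx0 : 0 ≤ Sx := Finset.sum_nonneg fun i _ => sq_nonneg _
  have h1Sx : 0 < 1 + Sx := by linarith
  set ρ : ℝ := max ‖x‖ 1 with hρdef
  have hρ1 : 1 ≤ ρ := le_max_right _ _
  have hρ0 : 0 < ρ := by linarith
  have hQρ : 0 < Q ρ := hQpos ρ hρ0
  have hρsq : ρ^2 ≤ 1 + Sx := by
    rcases max_cases ‖x‖ 1 with ⟨h1, _⟩ | ⟨h1, _⟩
    · rw [hρdef, h1, norm_sq_sum]; linarith
    · rw [hρdef, h1, one_pow]; linarith
  -- (a) u x close to ustar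
  have hgx0 : 0 ≤ Real.log (1 + Sx) := Real.log_nonneg (by linarith)
  have huxw0 : u w0 - ε * G0 ≤ u x - ε * Real.log (1 + Sx) := hmax w0
  have hεG0 : ε * G0 ≤ (u w0 - θ)/2 := by
    have h1 : ε * (G0 + 1) ≤ (u w0 - θ)/(2*(G0+1)) * (G0+1) :=
      mul_le_mul_of_nonneg_right hεθ (by linarith)
    have h2 : (u w0 - θ)/(2*(G0+1)) * (G0+1) = (u w0 - θ)/2 := by
      field_simp
    have h3 : ε * G0 + ε = ε * (G0 + 1) := by ring
    linarith
  have hux : θ < u x := by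
    have h1 : u x ≥ u w0 - ε * G0 := by
      have h4 : 0 ≤ ε * Real.log (1 + Sx) := mul_nonneg (le_of_lt hε0) hgx0
      linarith
    linarith
  have hγx : γ < u x := lt_of_le_of_lt (le_max_left _ _) hux
  have hfux : K ≤ f (u x) := by
    have hd : dist (u x) ustar < δ := by
      rw [Real.dist_eq, abs_lt]
      constructor
      · have hθη : ustar - η ≤ θ := le_max_right _ _
        have := hup x
        have hηδ : η = δ/2 := hηdef
        linarith
      · have := hup x
        linarith
    exact le_of_lt (hδ hd)
  -- first order: value of p and N
  set p : Fin m → ℝ := fun i => fderiv ℝ u x (eV m i) with hpdef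
  have hpval : ∀ i, p i = ε * ((1 + Sx)⁻¹ * (2 * x i)) := fun i => grad_at_max hu hmax i
  set N : ℝ := ∑ i, (p i)^2 with hNdef
  have hN0 : 0 ≤ N := Finset.sum_nonneg fun i _ => sq_nonneg _
  have hNval : N = ε^2 * ((1+Sx)⁻¹)^2 * (4 * Sx) := by
    rw [hNdef]
    rw [Finset.sum_congr rfl fun i _ => by rw [hpval i]]
    rw [show (∑ i, (ε * ((1 + Sx)⁻¹ * (2 * x i)))^2)
        = ∑ i, (ε^2 * ((1+Sx)⁻¹)^2 * 4) * (x i)^2 from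
      Finset.sum_congr rfl fun i _ => by ring]
    rw [← Finset.mul_sum, ← hSxdef]
    ring
  have hNε : N ≤ ε^2 := by
    rw [hNval]
    have h1 : 4 * Sx ≤ (1+Sx)^2 := by
      have ha := sq_nonneg (1 - Sx)
      have hb : (1-Sx)^2 = 1 - 2*Sx + Sx^2 := by ring
      have hc : (1+Sx)^2 = 1 + 2*Sx + Sx^2 := by ring
      linarith
    have h2 : ε^2 * ((1+Sx)⁻¹)^2 * (4 * Sx) ≤ ε^2 * ((1+Sx)⁻¹)^2 * (1+Sx)^2 := by
      apply mul_le_mul_of_nonneg_left h1 (by positivity)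
    have h3 : ((1+Sx)⁻¹)^2 * (1+Sx)^2 = 1 := by
      rw [← mul_pow, inv_mul_cancel₀ (ne_of_gt h1Sx), one_pow]
    calc ε^2 * ((1+Sx)⁻¹)^2 * (4 * Sx)
        ≤ ε^2 * (((1+Sx)⁻¹)^2 * (1+Sx)^2) := by
          calc ε^2 * ((1+Sx)⁻¹)^2 * (4 * Sx) ≤ ε^2 * ((1+Sx)⁻¹)^2 * (1+Sx)^2 := h2
            _ = ε^2 * (((1+Sx)⁻¹)^2 * (1+Sx)^2) := by ring
      _ = ε^2 := by rw [h3, mul_one]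
  have h1N : (0:ℝ) < 1 + N := by linarith
  -- second order bound: quadratic form
  set B : Fin m → Fin m → ℝ := fun i j => fderiv ℝ (fderiv ℝ u) x (eV m i) (eV m j) with hBdef
  set M : ℝ := ε * (2 / (1 + Sx)) with hMdef
  have hM0 : 0 ≤ M := by rw [hMdef]; positivity
  have hq : ∀ v : Fin m → ℝ, ∑ i, ∑ j, v i * v j * B i j ≤ M * ∑ i, (v i)^2 := by
    intro v
    set w : EuclideanSpace ℝ (Fin m) := ∑ i, v i • eV m i with hwdef
    have hwj : ∀ j, w j = v j := by
      intro j
      rw [hwdef, sum_coord_apply]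
      have : ∀ i, (v i • eV m i) j = v i * (if j = i then 1 else 0) := by
        intro i
        have : (eV m i) j = if j = i then 1 else 0 := by
          simp [eV, EuclideanSpace.single_apply]
        rw [← this]; rfl
      rw [Finset.sum_congr rfl fun i _ => this i]
      simp
    have hsumw : (∑ i, (w i)^2) = ∑ i, (v i)^2 :=
      Finset.sum_congr rfl fun i _ => by rw [hwj i]
    have hbil : fderiv ℝ (fderiv ℝ u) x w w = ∑ i, ∑ j, v i * v j * B i j := by
      have e1 : fderiv ℝ (fderiv ℝ u) x w
          = ∑ i, v i • (fderiv ℝ (fderiv ℝ u) x (eV m i)) := by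
        rw [hwdef, map_sum]
        exact Finset.sum_congr rfl fun i _ => by rw [map_smul]
      rw [e1, ContinuousLinearMap.sum_apply]
      refine Finset.sum_congr rfl fun i _ => ?_
      rw [ContinuousLinearMap.smul_apply]
      have e2 : (fderiv ℝ (fderiv ℝ u) x (eV m i)) w = ∑ j, v j * B i j := by
        rw [hwdef, map_sum]
        refine Finset.sum_congr rfl fun j _ => ?_
        rw [map_smul]
        simp only [smul_eq_mul, hBdef]
      rw [e2, smul_eq_mul, Finset.mul_sum]
      exact Finset.sum_congr rfl fun j _ => by ring
    have hh := hess_bound hu hε0 hmax w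
    rw [hbil, hsumw, ← hSxdef] at hh
    calc (∑ i, ∑ j, v i * v j * B i j) ≤ ε * (2 * (∑ i, (v i)^2) / (1 + Sx)) := hh
      _ = M * ∑ i, (v i)^2 := by rw [hMdef]; ring
  -- apply algebra lemma
  set cc : ℝ := (1 + N) ^ (-α) with hccdef
  set ββ : ℝ := 2 * α * (1 + N) ^ (-α - 1) with hββdef
  have hcc0 : 0 < cc := Real.rpow_pos_of_pos h1N _
  have hcc1 : cc ≤ 1 := Real.rpow_le_one_of_one_le_of_nonpos (by linarith) (by linarith)
  have hββ0 : 0 ≤ ββ := by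
    rw [hββdef]
    positivity
  have hsplitpow : (1 + N) ^ (-α - 1) = cc * (1+N)⁻¹ := by
    rw [hccdef, show -α - 1 = -α + (-1) by ring, Real.rpow_add h1N, Real.rpow_neg_one]
  have hββp : ββ * ((m:ℝ) * N) ≤ cc := by
    have h2aN : 2 * α * (m:ℝ) * N ≤ 1 + N := by
      have h1 : N ≤ ε * (1/(2*α*(m:ℝ))) := by
        calc N ≤ ε^2 := hNε
          _ = ε * ε := sq ε
          _ ≤ ε * (1/(2*α*(m:ℝ))) := mul_le_mul_of_nonneg_left hεα (le_of_lt hε0)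
      have h2 : 2*α*(m:ℝ) * (ε * (1/(2*α*(m:ℝ)))) = ε := by
        field_simp
      have h0 : (0:ℝ) ≤ 2*α*(m:ℝ) := by positivity
      have h3 := mul_le_mul_of_nonneg_left h1 h0
      rw [h2] at h3
      linarith
    have heq : ββ * ((m:ℝ) * N) = (2*α*(m:ℝ)*N) * ((1+N)⁻¹ * cc) := by
      rw [hββdef, hsplitpow]; ring
    rw [heq]
    have h3 : (2*α*(m:ℝ)*N) * (1+N)⁻¹ ≤ 1 := by
      rw [← div_eq_mul_inv, div_le_one h1N]
      exact h2aN
    calc (2*α*(m:ℝ)*N) * ((1+N)⁻¹ * cc) = ((2*α*(m:ℝ)*N) * (1+N)⁻¹) * cc := by ring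
      _ ≤ 1 * cc := mul_le_mul_of_nonneg_right h3 (le_of_lt hcc0)
      _ = cc := one_mul cc
  have halg := alg_aux B M hM0 hq p cc ββ (le_of_lt hcc0) hcc1 hββ0 hββp
  -- mean curvature bound
  have hmcval := mc_formula α u hu x
  have hmcb : meanCurvatureOp α u x ≤ (m:ℝ) * M := by
    rw [hmcval]
    have : (1 + ∑ i, (fderiv ℝ u x (eV m i))^2) = 1 + N := by rw [hNdef, hpdef]
    rw [this]
    calc (1+N) ^ (-α) * (∑ i, fderiv ℝ (fderiv ℝ u) x (eV m i) (eV m i))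
          + (-α * (1+N)^(-α-1)) * (2 * (∑ i, ∑ j, fderiv ℝ u x (eV m i) * fderiv ℝ u x (eV m j)
            * fderiv ℝ (fderiv ℝ u) x (eV m i) (eV m j)))
        = cc * (∑ i, B i i) - ββ * (∑ i, ∑ j, p i * p j * B i j) := by
          rw [hccdef, hββdef, hBdef, hpdef]; ring
      _ ≤ (m:ℝ) * M := halg
  -- chain of inequalities
  have hblow : 1 / Q ρ ≤ b x := b_lower hQpos hQmono hb hbQ (by omega) x
  have hKQρ : (1 / Q ρ) * K ≤ (m:ℝ) * M := by
    have h1 : (1 / Q ρ) * K ≤ b x * f (u x) := by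
      apply mul_le_mul hblow hfux (le_of_lt hK0)
      have : (0:ℝ) < 1 / Q ρ := by positivity
      linarith [hblow]
    exact le_trans h1 (le_trans (hineq x hγx) hmcb)
  have hKρ2 : K * ρ^2 ≤ 2*(m:ℝ)*ε*(Q ρ) := by
    have hmM : (m:ℝ) * M = 2*(m:ℝ)*ε/(1+Sx) := by rw [hMdef]; ring
    rw [hmM] at hKQρ
    rw [div_mul_eq_mul_div, div_le_div_iff₀ hQρ h1Sx] at hKQρ
    -- hKQρ : 1 * K * (1+Sx) ≤ 2*m*ε * Q ρ
    have h2 : K * ρ^2 ≤ K * (1+Sx) := mul_le_mul_of_nonneg_left hρsq (le_of_lt hK0)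
    linarith [hKQρ]
  -- rho is large
  have hρS : S < ρ := by
    by_contra hρS
    push_neg at hρS
    have hQρS : Q ρ ≤ Q S := hQmono ρ S hρ0 hρS
    have h1 : ε * (2*(m:ℝ)*Q S + 1) ≤ K := by
      rw [← le_div_iff₀ (by positivity : (0:ℝ) < 2*(m:ℝ)*Q S + 1)]
      exact hεQS
    have hρ2 : 1 ≤ ρ^2 := by
      have := mul_le_mul hρ1 hρ1 zero_le_one (by linarith : (0:ℝ) ≤ ρ)
      have hsq : ρ^2 = ρ*ρ := sq ρ
      linarith
    have h2 : K ≤ K * ρ^2 := by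
      have := mul_le_mul_of_nonneg_left hρ2 (le_of_lt hK0)
      linarith
    have h3 : 2*(m:ℝ)*ε*(Q ρ) ≤ 2*(m:ℝ)*ε*(Q S) :=
      mul_le_mul_of_nonneg_left hQρS (by positivity)
    have h4 : ε * (2*(m:ℝ)*Q S + 1) = 2*(m:ℝ)*ε*(Q S) + ε := by ring
    linarith
  have hρR2 : R2 ≤ ρ := le_trans (le_trans (le_max_left R2 3) (le_of_lt hρS)) le_rfl
  have hQρρ : Q ρ ≤ c1/2 * ρ^2 := by
    have := hR2 ρ hρR2
    have h1 : Q ρ ≤ ‖Q ρ‖ := le_abs_self _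
    have h2 : ‖ρ^2‖ = ρ^2 := by
      rw [Real.norm_eq_abs, abs_of_pos (by positivity)]
    rw [h2] at this
    linarith
  have hlogρ : 1 < Real.log ρ := by
    rw [← Real.log_exp 1]
    apply Real.log_lt_log (Real.exp_pos 1)
    have h1 : Real.exp 1 < 2.7182818286 := Real.exp_one_lt_d9
    have : (3:ℝ) ≤ ρ := le_trans hS3 (le_of_lt hρS)
    linarith
  -- growth estimate
  have hgrowth : ε * (2 * Real.log ρ) ≤ C1 := by
    have h1 : ε * Real.log (1 + Sx) ≤ u x - u w0 + ε * G0 := by linarith [huxw0]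
    have h2 : u x - u w0 ≤ C0 := by rw [hC0def]; linarith [hup x]
    have h3 : ε * G0 ≤ G0 := by
      have := mul_le_mul_of_nonneg_right hε1 hG00
      linarith
    have h4 : 2 * Real.log ρ ≤ Real.log (1 + Sx) := by
      have h5 : Real.log (ρ^2) ≤ Real.log (1 + Sx) :=
        Real.log_le_log (by positivity) hρsq
      rw [Real.log_pow] at h5
      push_cast at h5
      linarith
    have h6 : ε * (2 * Real.log ρ) ≤ ε * Real.log (1 + Sx) :=
      mul_le_mul_of_nonneg_left h4 (le_of_lt hε0)
    rw [hC1def]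
    linarith
  -- final contradiction
  set L : ℝ := Real.log ρ with hLdef
  have hL0 : 0 ≤ L := by rw [hLdef]; linarith
  have step1 : K * ρ^2 * L ≤ 2*(m:ℝ)*ε*(Q ρ) * L := mul_le_mul_of_nonneg_right hKρ2 hL0
  have step2 : 2*(m:ℝ)*ε*(Q ρ) * L = (m:ℝ)*(Q ρ)*(ε*(2*L)) := by ring
  have step3 : (m:ℝ)*(Q ρ)*(ε*(2*L)) ≤ (m:ℝ)*(Q ρ)*(C1+1) := by
    apply mul_le_mul_of_nonneg_left _ (by positivity)
    linarith [hgrowth]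
  have hKc1 : K = c1 * ((m:ℝ) * (C1 + 1)) := by
    rw [hc1def]
    field_simp
  have step4 : c1 * ρ^2 * L ≤ Q ρ := by
    have h1 : ((m:ℝ)*(C1+1)) * (c1 * ρ^2 * L) ≤ ((m:ℝ)*(C1+1)) * Q ρ := by
      calc ((m:ℝ)*(C1+1)) * (c1 * ρ^2 * L) = K * ρ^2 * L := by rw [hKc1]; ring
        _ ≤ (m:ℝ)*(Q ρ)*(C1+1) := by linarith [step1, step2 ▸ step1, step3]
        _ = ((m:ℝ)*(C1+1)) * Q ρ := by ring
    exact le_of_mul_le_mul_left h1 (by positivity)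
  have step5 : c1 * ρ^2 < c1 * ρ^2 * L := by
    have h1 : 0 < c1 * ρ^2 := by positivity
    have h2 := mul_lt_mul_of_pos_left hlogρ h1
    rw [mul_one] at h2
    exact h2
  have hfin : c1 * ρ^2 < c1/2 * ρ^2 := lt_of_lt_of_le (lt_of_lt_of_le step5 step4) hQρρ
  have hρ2pos : 0 < ρ^2 := by positivity
  have h9 : c1/2 * ρ^2 < c1 * ρ^2 := mul_lt_mul_of_pos_right (by linarith) hρ2pos
  linarith
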